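/- arXiv:1401.0852 — 4 statements merged into one kernel-verified Lean document; each statement's English description precedes it below -/
import Mathlib

section
/- If B₁ ≠ B₂ are weighted adjacency matrices of DAGs admitting a common topological sort (equivalently, both P_π B₁ and P_π B₂ are strictly lower triangular for a common permutation π), then for any positive diagonal matrices Ω₁, Ω₂ we have Θ(B₁,Ω₁) ≠ Θ(B₂,Ω₂), where Θ(B,Ω) = (I − B)Ω^{−1}(I − B)ᵀ. -/
open Matrix

section Aux

variable {p : ℕ}

/-- lower triangular predicate -/
def LowT (M : Matrix (Fin p) (Fin p) ℝ) : Prop := ∀ i j : Fin p, i < j → M i j = 0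

lemma lowT_iff (M : Matrix (Fin p) (Fin p) ℝ) :
    LowT M ↔ M.BlockTriangular OrderDual.toDual := by
  constructor
  · intro h i j hij; exact h i j hij
  · intro h i j hij; exact h hij

lemma lowT_mul {M N : Matrix (Fin p) (Fin p) ℝ} (hM : LowT M) (hN : LowT N) :
    LowT (M * N) := by
  rw [lowT_iff] at *
  exact hM.mul hN

lemma det_one_of_unitLow {M : Matrix (Fin p) (Fin p) ℝ}
    (hM : LowT M) (hd : ∀ i, M i i = 1) : M.det = 1 := by
  rw [Matrix.det_of_lowerTriangular M ((lowT_iff M).mp hM)]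
  simp [hd]

lemma key_lemma (A₁ A₂ : Matrix (Fin p) (Fin p) ℝ) (d₁ d₂ : Fin p → ℝ)
    (hA₁ : ∀ i j : Fin p, i ≤ j → A₁ i j = 0)
    (hA₂ : ∀ i j : Fin p, i ≤ j → A₂ i j = 0)
    (hd₁ : ∀ i, d₁ i ≠ 0)
    (heq : (1 - A₁) * diagonal d₁ * (1 - A₁)ᵀ = (1 - A₂) * diagonal d₂ * (1 - A₂)ᵀ) :
    A₁ = A₂ := by
  set L₁ := 1 - A₁ with hL₁
  set L₂ := 1 - A₂ with hL₂
  have hL₁low : LowT L₁ := fun i j hij => by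
    simp [hL₁, Matrix.sub_apply, Matrix.one_apply, hij.ne, hA₁ i j hij.le]
  have hL₂low : LowT L₂ := fun i j hij => by
    simp [hL₂, Matrix.sub_apply, Matrix.one_apply, hij.ne, hA₂ i j hij.le]
  have hL₁diag : ∀ i, L₁ i i = 1 := fun i => by
    simp [hL₁, Matrix.sub_apply, Matrix.one_apply, hA₁ i i le_rfl]
  have hL₂diag : ∀ i, L₂ i i = 1 := fun i => by
    simp [hL₂, Matrix.sub_apply, Matrix.one_apply, hA₂ i i le_rfl]
  have hdet₁ : L₁.det = 1 := det_one_of_unitLow hL₁low hL₁diag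
  have hdet₂ : L₂.det = 1 := det_one_of_unitLow hL₂low hL₂diag
  have hu₂ : IsUnit L₂.det := by rw [hdet₂]; exact isUnit_one
  have hu₂t : IsUnit L₂ᵀ.det := by rw [Matrix.det_transpose, hdet₂]; exact isUnit_one
  set M := L₂⁻¹ * L₁ with hM
  -- M is lower triangular
  have hinv₂ : Invertible L₂ := L₂.invertibleOfIsUnitDet hu₂
  have hL₂invlow : LowT L₂⁻¹ := by
    rw [lowT_iff]
    exact Matrix.blockTriangular_inv_of_blockTriangular ((lowT_iff L₂).mp hL₂low)
  have hMlow : LowT M := lowT_mul hL₂invlow hL₁low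
  have hMdet : IsUnit M.det := by
    rw [hM, Matrix.det_mul, Matrix.det_nonsing_inv, hdet₁, hdet₂]
    simp
  have hinvM : Invertible M := M.invertibleOfIsUnitDet hMdet
  have hMinvlow : LowT M⁻¹ := by
    rw [lowT_iff]
    exact Matrix.blockTriangular_inv_of_blockTriangular ((lowT_iff M).mp hMlow)
  -- M * D₁ * Mᵀ = D₂
  have hMDM : M * diagonal d₁ * Mᵀ = diagonal d₂ := by
    have : L₂⁻¹ * (L₁ * diagonal d₁ * L₁ᵀ) * (L₂ᵀ)⁻¹
        = L₂⁻¹ * (L₂ * diagonal d₂ * L₂ᵀ) * (L₂ᵀ)⁻¹ := by rw [heq]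
    calc M * diagonal d₁ * Mᵀ
        = L₂⁻¹ * (L₁ * diagonal d₁ * L₁ᵀ) * (L₂ᵀ)⁻¹ := by
          rw [hM, Matrix.transpose_mul, Matrix.transpose_nonsing_inv]
          noncomm_ring
      _ = L₂⁻¹ * (L₂ * diagonal d₂ * L₂ᵀ) * (L₂ᵀ)⁻¹ := this
      _ = diagonal d₂ := by
          rw [show L₂⁻¹ * (L₂ * diagonal d₂ * L₂ᵀ) * (L₂ᵀ)⁻¹
              = (L₂⁻¹ * L₂) * diagonal d₂ * (L₂ᵀ * (L₂ᵀ)⁻¹) by noncomm_ring,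
            Matrix.nonsing_inv_mul _ hu₂, Matrix.mul_nonsing_inv _ hu₂t]
          simp
  -- M * D₁ = D₂ * (M⁻¹)ᵀ
  have hMtinv : IsUnit Mᵀ.det := by rw [Matrix.det_transpose]; exact hMdet
  have hMD : M * diagonal d₁ = diagonal d₂ * (M⁻¹)ᵀ := by
    have := congrArg (fun X => X * (Mᵀ)⁻¹) hMDM
    rw [Matrix.mul_assoc, Matrix.mul_nonsing_inv _ hMtinv, Matrix.mul_one] at this
    rw [this, Matrix.transpose_nonsing_inv]
  -- M is diagonal
  have hMoff : ∀ i j : Fin p, i ≠ j → M i j = 0 := by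
    intro i j hij
    rcases lt_or_gt_of_ne hij with h | h
    · exact hMlow i j h
    · have := congrFun (congrFun hMD i) j
      rw [Matrix.mul_diagonal, Matrix.diagonal_mul, Matrix.transpose_apply,
        hMinvlow j i h, mul_zero] at this
      exact (mul_eq_zero.mp this).resolve_right (hd₁ j)
  -- L₁ = L₂ * M
  have hL₁eq : L₁ = L₂ * M := by
    rw [hM, ← Matrix.mul_assoc, Matrix.mul_nonsing_inv _ hu₂, Matrix.one_mul]
  -- diagonal of M is 1
  have hMdiag : ∀ i, M i i = 1 := by
    intro i
    have h1 : L₁ i i = ∑ k, L₂ i k * M k i := by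
      rw [hL₁eq]; rfl
    rw [hL₁diag i, Finset.sum_eq_single i] at h1
    · rw [hL₂diag i, one_mul] at h1; exact h1.symm
    · intro k _ hk
      rw [hMoff k i hk, mul_zero]
    · intro h; exact absurd (Finset.mem_univ i) h
  have hMone : M = 1 := by
    ext i j
    by_cases hij : i = j
    · subst hij; rw [hMdiag i, Matrix.one_apply_eq]
    · rw [hMoff i j hij, Matrix.one_apply_ne hij]
  have : L₁ = L₂ := by rw [hL₁eq, hMone, Matrix.mul_one]
  rw [hL₁, hL₂, sub_right_inj] at this
  exact this

end Aux

/-- Distinct DAGs with a common topological sort give distinct precision matrices. -/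
theorem theta_injective_common_sort {p : ℕ}
    (B₁ B₂ Ω₁ Ω₂ : Matrix (Fin p) (Fin p) ℝ) (π : Equiv.Perm (Fin p))
    (h1 : ∀ i j : Fin p, i ≤ j → B₁.submatrix π π i j = 0)
    (h2 : ∀ i j : Fin p, i ≤ j → B₂.submatrix π π i j = 0)
    (hΩ₁d : ∀ i j : Fin p, i ≠ j → Ω₁ i j = 0) (hΩ₁p : ∀ i, 0 < Ω₁ i i)
    (hΩ₂d : ∀ i j : Fin p, i ≠ j → Ω₂ i j = 0) (hΩ₂p : ∀ i, 0 < Ω₂ i i)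
    (hne : B₁ ≠ B₂) :
    (1 - B₁) * Ω₁⁻¹ * (1 - B₁)ᵀ ≠ (1 - B₂) * Ω₂⁻¹ * (1 - B₂)ᵀ := by
  intro heq
  apply hne
  -- inverses of Ω are diagonal
  have hdiaginv : ∀ (Ω : Matrix (Fin p) (Fin p) ℝ),
      (∀ i j : Fin p, i ≠ j → Ω i j = 0) → (∀ i, 0 < Ω i i) →
      Ω⁻¹ = diagonal (fun i => (Ω i i)⁻¹) := by
    intro Ω hd hp
    have hΩeq : Ω = diagonal (fun i => Ω i i) := by
      ext i j
      by_cases h : i = j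
      · subst h; simp
      · rw [hd i j h, Matrix.diagonal_apply_ne _ h]
    apply Matrix.inv_eq_right_inv
    ext i j
    rw [Matrix.mul_diagonal]
    by_cases h : i = j
    · subst h; rw [Matrix.one_apply_eq, mul_inv_cancel₀ (hp i).ne']
    · rw [hd i j h, zero_mul, Matrix.one_apply_ne h]
  -- submatrix of a diagonal matrix
  have hsubdiag : ∀ (w : Fin p → ℝ),
      (diagonal w).submatrix (π : Fin p → Fin p) (π : Fin p → Fin p)
        = diagonal (fun i => w (π i)) := by
    intro w
    ext i j
    by_cases h : i = j
    · subst h; simp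
    · have hπ : π i ≠ π j := fun hc => h (π.injective hc)
      simp [Matrix.submatrix_apply, Matrix.diagonal_apply_ne _ h,
        Matrix.diagonal_apply_ne _ hπ]
  -- submatrix of 1 - B
  have hsubone : ∀ (B : Matrix (Fin p) (Fin p) ℝ),
      (1 - B).submatrix (π : Fin p → Fin p) (π : Fin p → Fin p)
        = 1 - B.submatrix (π : Fin p → Fin p) (π : Fin p → Fin p) := by
    intro B
    ext i j
    simp [Matrix.submatrix_apply, Matrix.sub_apply, Matrix.one_apply,
      π.injective.eq_iff]
  -- permuting the whole product
  have hperm : ∀ (B Ω : Matrix (Fin p) (Fin p) ℝ),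
      ((1 - B) * Ω * (1 - B)ᵀ).submatrix (π : Fin p → Fin p) (π : Fin p → Fin p)
        = (1 - B.submatrix π π) * Ω.submatrix (π : Fin p → Fin p) (π : Fin p → Fin p)
          * (1 - B.submatrix π π)ᵀ := by
    intro B Ω
    rw [← Matrix.submatrix_mul_equiv ((1 - B) * Ω) (1 - B)ᵀ π π _,
      ← Matrix.submatrix_mul_equiv (1 - B) Ω π π _,
      hsubone B, ← Matrix.transpose_submatrix, hsubone B]
  have hsub := congrArg
    (fun X => X.submatrix (π : Fin p → Fin p) (π : Fin p → Fin p)) heq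
  simp only [hperm] at hsub
  rw [hdiaginv Ω₁ hΩ₁d hΩ₁p, hdiaginv Ω₂ hΩ₂d hΩ₂p, hsubdiag, hsubdiag] at hsub
  have hkey := key_lemma (B₁.submatrix π π) (B₂.submatrix π π)
    (fun i => (Ω₁ (π i) (π i))⁻¹) (fun i => (Ω₂ (π i) (π i))⁻¹)
    h1 h2 (fun i => inv_ne_zero (hΩ₁p (π i)).ne') hsub
  have := congrArg
    (fun X => X.submatrix (π.symm : Fin p → Fin p) (π.symm : Fin p → Fin p)) hkey
  simpa [Matrix.submatrix_submatrix, Function.comp] using this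
end

section
/- Let Θ₀ be a symmetric positive definite matrix. The equivalence class ℰ(Θ₀) = {(B,Ω) : B a DAG adjacency matrix, Ω positive diagonal, (I−B)Ω^{−1}(I−B)ᵀ = Θ₀} equals the set {(P_{π^{−1}}L, P_{π^{−1}}D) : π a permutation, P_π Θ₀ = (I−L)D^{−1}(I−L)ᵀ with L strictly lower triangular and D positive diagonal}. In particular, ℰ(Θ₀) is a finite set with at most p! elements. -/
open Matrix

/-- The DAG equivalence class of a precision matrix Θ₀. -/
def dagClass (p : ℕ) (Θ₀ : Matrix (Fin p) (Fin p) ℝ) :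
    Set (Matrix (Fin p) (Fin p) ℝ × Matrix (Fin p) (Fin p) ℝ) :=
  { BΩ | (∃ π : Equiv.Perm (Fin p), ∀ i j : Fin p, i ≤ j → BΩ.1.submatrix π π i j = 0) ∧
      (∀ i j : Fin p, i ≠ j → BΩ.2 i j = 0) ∧ (∀ i, 0 < BΩ.2 i i) ∧
      (1 - BΩ.1) * BΩ.2⁻¹ * (1 - BΩ.1)ᵀ = Θ₀ }

/-- Key uniqueness for "unit lower triangular times diagonal" Gram-type expressions. -/
lemma key_unique {p : ℕ} (M₁ M₂ : Matrix (Fin p) (Fin p) ℝ) (d₁ d₂ : Fin p → ℝ)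
    (h₁diag : ∀ i, M₁ i i = 1) (h₂diag : ∀ i, M₂ i i = 1)
    (h₁up : ∀ i j : Fin p, i < j → M₁ i j = 0) (h₂up : ∀ i j : Fin p, i < j → M₂ i j = 0)
    (hd₂ : ∀ k, d₂ k ≠ 0)
    (hE : ∀ i j : Fin p, ∑ k, M₁ i k * d₁ k * M₁ j k = ∑ k, M₂ i k * d₂ k * M₂ j k) :
    ∀ j : Fin p, d₁ j = d₂ j ∧ ∀ i, M₁ i j = M₂ i j := by
  suffices h : ∀ n : ℕ, ∀ j : Fin p, (j : ℕ) < n → (d₁ j = d₂ j ∧ ∀ i, M₁ i j = M₂ i j) by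
    exact fun j => h ((j : ℕ) + 1) j (Nat.lt_succ_self _)
  intro n
  induction n with
  | zero => exact fun j hj => absurd hj (Nat.not_lt_zero _)
  | succ n ih =>
  intro j hj
  have IH : ∀ k : Fin p, k < j → d₁ k = d₂ k ∧ ∀ i, M₁ i k = M₂ i k := by
    intro k hk
    exact ih k (by omega)
  have cancel : ∀ i, M₁ i j * d₁ j * M₁ j j = M₂ i j * d₂ j * M₂ j j := by
    intro i
    have h := hE i j
    rw [← Finset.add_sum_erase _ _ (Finset.mem_univ j),
        ← Finset.add_sum_erase _ _ (Finset.mem_univ j)] at h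
    have hrest : ∑ k ∈ Finset.univ.erase j, M₁ i k * d₁ k * M₁ j k =
        ∑ k ∈ Finset.univ.erase j, M₂ i k * d₂ k * M₂ j k := by
      refine Finset.sum_congr rfl (fun k hk => ?_)
      have hkj : k ≠ j := Finset.ne_of_mem_erase hk
      rcases lt_or_gt_of_ne hkj with h1 | h1
      · obtain ⟨hd, hM⟩ := IH k h1
        rw [hd, hM i, hM j]
      · rw [h₁up j k h1, h₂up j k h1]; ring
    rw [hrest] at h
    exact add_right_cancel h
  have hd : d₁ j = d₂ j := by
    have := cancel j
    simpa [h₁diag, h₂diag] using this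
  refine ⟨hd, fun i => ?_⟩
  have := cancel i
  rw [h₁diag, h₂diag, mul_one, mul_one, hd] at this
  exact mul_right_cancel₀ (hd₂ j) this

/-- Entry formula for `(1 - L) * D⁻¹ * (1 - L)ᵀ` when `D` is positive diagonal. -/
lemma entry_formula {p : ℕ} (L D : Matrix (Fin p) (Fin p) ℝ)
    (hDoff : ∀ i j : Fin p, i ≠ j → D i j = 0) (hDpos : ∀ i, 0 < D i i) (i j : Fin p) :
    ((1 - L) * D⁻¹ * (1 - L)ᵀ : Matrix (Fin p) (Fin p) ℝ) i j
      = ∑ k, (1 - L) i k * (D k k)⁻¹ * (1 - L) j k := by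
  have hD : D = Matrix.diagonal (fun i => D i i) := by
    ext a b
    by_cases h : a = b
    · subst h; simp
    · simp [Matrix.diagonal_apply_ne _ h, hDoff a b h]
  have hDinv : D⁻¹ = Matrix.diagonal (fun i => (D i i)⁻¹) := by
    apply Matrix.inv_eq_right_inv
    nth_rewrite 1 [hD]
    rw [Matrix.diagonal_mul_diagonal]
    ext a b
    by_cases h : a = b
    · subst h; simp [mul_inv_cancel₀ (hDpos a).ne']
    · simp [Matrix.diagonal_apply_ne _ h, Matrix.one_apply_ne h]
  rw [hDinv]
  simp only [Matrix.mul_apply, Matrix.diagonal_apply, Matrix.transpose_apply,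
    mul_ite, ite_mul, mul_zero, zero_mul, Finset.sum_ite_eq, Finset.sum_ite_eq', Finset.mem_univ, if_true]

/-- Uniqueness of the (permuted) Cholesky/LDL factorization. -/
lemma ldl_unique {p : ℕ} (L₁ L₂ D₁ D₂ : Matrix (Fin p) (Fin p) ℝ)
    (hL₁ : ∀ i j : Fin p, i ≤ j → L₁ i j = 0) (hL₂ : ∀ i j : Fin p, i ≤ j → L₂ i j = 0)
    (hD₁off : ∀ i j : Fin p, i ≠ j → D₁ i j = 0) (hD₁pos : ∀ i, 0 < D₁ i i)
    (hD₂off : ∀ i j : Fin p, i ≠ j → D₂ i j = 0) (hD₂pos : ∀ i, 0 < D₂ i i)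
    (heq : (1 - L₁) * D₁⁻¹ * (1 - L₁)ᵀ = (1 - L₂) * D₂⁻¹ * (1 - L₂)ᵀ) :
    L₁ = L₂ ∧ D₁ = D₂ := by
  have key := key_unique (1 - L₁) (1 - L₂) (fun k => (D₁ k k)⁻¹) (fun k => (D₂ k k)⁻¹)
    (fun i => by simp [Matrix.sub_apply, hL₁ i i le_rfl])
    (fun i => by simp [Matrix.sub_apply, hL₂ i i le_rfl])
    (fun i j hij => by simp [Matrix.sub_apply, Matrix.one_apply_ne (ne_of_lt hij),
      hL₁ i j hij.le])
    (fun i j hij => by simp [Matrix.sub_apply, Matrix.one_apply_ne (ne_of_lt hij),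
      hL₂ i j hij.le])
    (fun k => inv_ne_zero (hD₂pos k).ne')
    (fun i j => by
      rw [← entry_formula L₁ D₁ hD₁off hD₁pos i j, ← entry_formula L₂ D₂ hD₂off hD₂pos i j, heq])
  constructor
  · ext i j
    have := (key j).2 i
    simp only [Matrix.sub_apply] at this
    linarith
  · ext i j
    by_cases h : i = j
    · subst h
      have := (key i).1
      exact inv_injective this
    · rw [hD₁off i j h, hD₂off i j h]

/-- Submatrix (by a permutation) commutes with the factorization expression. -/
lemma submatrix_fac {p : ℕ} (B Ω : Matrix (Fin p) (Fin p) ℝ) (e : Equiv.Perm (Fin p)) :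
    ((1 - B) * Ω⁻¹ * (1 - B)ᵀ).submatrix e e =
      (1 - B.submatrix e e) * (Ω.submatrix e e)⁻¹ * (1 - B.submatrix e e)ᵀ := by
  have h1 : (1 : Matrix (Fin p) (Fin p) ℝ) - B.submatrix e e = (1 - B).submatrix e e := by
    ext i j
    simp [Matrix.one_apply, Matrix.sub_apply, Equiv.apply_eq_iff_eq]
  rw [h1, Matrix.inv_submatrix_equiv, Matrix.transpose_submatrix,
    Matrix.submatrix_mul_equiv, Matrix.submatrix_mul_equiv]

/-- The equivalence class ℰ(Θ₀) is exactly the set of permuted Cholesky factorizations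
of Θ₀, and in particular is finite with at most p! elements. -/
theorem dagClass_eq_cholesky {p : ℕ} (Θ₀ : Matrix (Fin p) (Fin p) ℝ)
    (hsym : Θ₀.IsSymm) (hpd : Θ₀.PosDef) :
    dagClass p Θ₀ =
      { BΩ | ∃ (π : Equiv.Perm (Fin p)) (L D : Matrix (Fin p) (Fin p) ℝ),
          (∀ i j : Fin p, i ≤ j → L i j = 0) ∧
          (∀ i j : Fin p, i ≠ j → D i j = 0) ∧ (∀ i, 0 < D i i) ∧
          Θ₀.submatrix π π = (1 - L) * D⁻¹ * (1 - L)ᵀ ∧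
          BΩ.1 = L.submatrix π.symm π.symm ∧ BΩ.2 = D.submatrix π.symm π.symm } ∧
    (dagClass p Θ₀).Finite ∧ Nat.card (dagClass p Θ₀) ≤ Nat.factorial p := by
  have Seq : dagClass p Θ₀ =
      { BΩ | ∃ (π : Equiv.Perm (Fin p)) (L D : Matrix (Fin p) (Fin p) ℝ),
          (∀ i j : Fin p, i ≤ j → L i j = 0) ∧
          (∀ i j : Fin p, i ≠ j → D i j = 0) ∧ (∀ i, 0 < D i i) ∧
          Θ₀.submatrix π π = (1 - L) * D⁻¹ * (1 - L)ᵀ ∧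
          BΩ.1 = L.submatrix π.symm π.symm ∧ BΩ.2 = D.submatrix π.symm π.symm } := by
    ext BΩ
    constructor
    · rintro ⟨⟨π, hπ⟩, hΩoff, hΩpos, hfac⟩
      refine ⟨π, BΩ.1.submatrix π π, BΩ.2.submatrix π π, hπ, ?_, ?_, ?_, ?_, ?_⟩
      · intro i j hij
        exact hΩoff (π i) (π j) (fun h => hij (π.injective h))
      · intro i
        exact hΩpos (π i)
      · rw [← hfac, submatrix_fac]
      · ext i j; simp
      · ext i j; simp
    · rintro ⟨π, L, D, hL, hDoff, hDpos, hfac, hB, hΩ⟩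
      refine ⟨⟨π, fun i j hij => ?_⟩, fun i j hij => ?_, fun i => ?_, ?_⟩
      · rw [hB]; simpa using hL i j hij
      · rw [hΩ]
        exact hDoff _ _ (fun h => hij (π.symm.injective h))
      · rw [hΩ]; exact hDpos _
      · have : Θ₀ = (Θ₀.submatrix π π).submatrix π.symm π.symm := by
          ext i j; simp
        rw [this, hfac, hB, hΩ, submatrix_fac]
  refine ⟨Seq, ?_⟩
  have hex : ∀ x : ↥(dagClass p Θ₀), ∃ (π : Equiv.Perm (Fin p)),
      ∃ (L D : Matrix (Fin p) (Fin p) ℝ),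
      (∀ i j : Fin p, i ≤ j → L i j = 0) ∧
      (∀ i j : Fin p, i ≠ j → D i j = 0) ∧ (∀ i, 0 < D i i) ∧
      Θ₀.submatrix π π = (1 - L) * D⁻¹ * (1 - L)ᵀ ∧
      (x : Matrix (Fin p) (Fin p) ℝ × Matrix (Fin p) (Fin p) ℝ).1 = L.submatrix π.symm π.symm ∧
      (x : Matrix (Fin p) (Fin p) ℝ × Matrix (Fin p) (Fin p) ℝ).2 = D.submatrix π.symm π.symm := by
    intro x
    exact (Set.ext_iff.mp Seq x).mp x.2
  choose f L D hL hDoff hDpos hfac hB hΩ using hex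
  have hfinj : Function.Injective f := by
    intro x y hxy
    have heq : (1 - L x) * (D x)⁻¹ * (1 - L x)ᵀ = (1 - L y) * (D y)⁻¹ * (1 - L y)ᵀ := by
      rw [← hfac x, ← hfac y, hxy]
    obtain ⟨hLeq, hDeq⟩ := ldl_unique (L x) (L y) (D x) (D y) (hL x) (hL y)
      (hDoff x) (hDpos x) (hDoff y) (hDpos y) heq
    have h1 : (x : Matrix (Fin p) (Fin p) ℝ × Matrix (Fin p) (Fin p) ℝ).1 =
        (y : Matrix (Fin p) (Fin p) ℝ × Matrix (Fin p) (Fin p) ℝ).1 := by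
      rw [hB x, hB y, hLeq, hxy]
    have h2 : (x : Matrix (Fin p) (Fin p) ℝ × Matrix (Fin p) (Fin p) ℝ).2 =
        (y : Matrix (Fin p) (Fin p) ℝ × Matrix (Fin p) (Fin p) ℝ).2 := by
      rw [hΩ x, hΩ y, hDeq, hxy]
    exact Subtype.ext (Prod.ext h1 h2)
  have hfin : Finite ↥(dagClass p Θ₀) := Finite.of_injective f hfinj
  refine ⟨Set.finite_coe_iff.mp hfin, ?_⟩
  calc Nat.card ↥(dagClass p Θ₀) ≤ Nat.card (Equiv.Perm (Fin p)) :=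
        Nat.card_le_card_of_injective f hfinj
    _ = Nat.factorial p := by
        rw [Nat.card_eq_fintype_card, Fintype.card_perm, Fintype.card_fin]
end

section
/- Let λ > 0 and γ > 1. The unique global minimizer over β ∈ ℝ of Q¹(β) = ½(β − β̃)² + p_λ(|β|;γ), where p_λ(·;γ) is the MCP, is given by the MCP threshold function: S_γ(β̃, λ) = 0 if |β̃| ≤ λ; S_γ(β̃, λ) = sgn(β̃)(|β̃| − λ)/(1 − 1/γ) if λ < |β̃| ≤ λγ; and S_γ(β̃, λ) = β̃ if |β̃| > λγ. -/
set_option maxHeartbeats 1000000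


/-- The minimax concave penalty (MCP). -/
noncomputable def mcp (l g t : ℝ) : ℝ :=
  if t < l * g then l * (t - t ^ 2 / (2 * l * g)) else l ^ 2 * g / 2

/-- The MCP threshold function. -/
noncomputable def mcpThresh (l g b : ℝ) : ℝ :=
  if |b| ≤ l then 0
  else if |b| ≤ l * g then Real.sign b * (|b| - l) / (1 - 1 / g)
  else b

/-- For γ > 1, the MCP threshold function is the unique global minimizer of the
single-parameter penalized least squares objective Q¹(β) = ½(β − β̃)² + p_λ(|β|; γ). -/
theorem mcp_threshold_minimizer (l g b : ℝ) (hl : 0 < l) (hg : 1 < g) :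
    ∀ β : ℝ, β ≠ mcpThresh l g b →
      (mcpThresh l g b - b) ^ 2 / 2 + mcp l g |mcpThresh l g b|
        < (β - b) ^ 2 / 2 + mcp l g |β| := by
  intro β hβ
  have hg0 : (0:ℝ) < g := by linarith
  have hgne : g ≠ 0 := ne_of_gt hg0
  have hlne : l ≠ 0 := ne_of_gt hl
  have h2g : (0:ℝ) < 2*g := by linarith
  -- mcp equals the quadratic branch on [0, l*g]
  have hmcp_eq : ∀ t : ℝ, 0 ≤ t → t ≤ l*g → mcp l g t = l*t - t^2/(2*g) := by
    intro t ht0 ht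
    unfold mcp
    rcases ht.lt_or_eq with h | h
    · rw [if_pos h]; field_simp
    · rw [if_neg (by rw [h]; exact lt_irrefl _), h]; field_simp; ring
  -- mcp is bounded below by the quadratic branch
  have hmcp_ge : ∀ t : ℝ, 0 ≤ t → l*t - t^2/(2*g) ≤ mcp l g t := by
    intro t ht0
    by_cases h : t < l*g
    · exact le_of_eq (hmcp_eq t ht0 h.le).symm
    · unfold mcp
      rw [if_neg h]
      have key : l^2*g/2 - (l*t - t^2/(2*g)) = (t - l*g)^2/(2*g) := by
        field_simp; ring
      nlinarith [sq_nonneg (t - l*g), div_nonneg (sq_nonneg (t - l*g)) h2g.le]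
  by_cases h1 : |b| ≤ l
  · -- Case A : thresh = 0
    simp only [mcpThresh, if_pos h1] at hβ ⊢
    have h0 : mcp l g |(0:ℝ)| = 0 := by
      rw [abs_zero, hmcp_eq 0 le_rfl (by positivity)]; ring
    rw [h0]
    have hge := hmcp_ge |β| (abs_nonneg β)
    rw [sq_abs] at hge
    have hβ2 : 0 < β^2 := by positivity
    have hbβ : b*β ≤ l*|β| := by
      have e1 : b*β ≤ |b*β| := le_abs_self _
      have e2 : |b*β| = |b| * |β| := abs_mul _ _
      have e3 : |b| * |β| ≤ l * |β| := mul_le_mul_of_nonneg_right h1 (abs_nonneg β)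
      linarith
    have hdiv : β^2/(2*g) < β^2/2 := by
      apply div_lt_div_of_pos_left hβ2 two_pos
      linarith
    nlinarith [hge, hbβ, hdiv]
  · by_cases h2 : |b| ≤ l*g
    · -- Case B : middle branch
      have hb0 : b ≠ 0 := by
        intro h; rw [h, abs_zero] at h1; exact h1 hl.le
      have hσ : Real.sign b = 1 ∨ Real.sign b = -1 := by
        rcases lt_or_gt_of_ne hb0 with h | h
        · exact Or.inr (Real.sign_of_neg h)
        · exact Or.inl (Real.sign_of_pos h)
      set σ := Real.sign b with hσdef
      have hb' : σ * |b| = b := by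
        rcases lt_or_gt_of_ne hb0 with h | h
        · rw [hσdef, Real.sign_of_neg h, abs_of_neg h]; ring
        · rw [hσdef, Real.sign_of_pos h, abs_of_pos h]; ring
      have hσb : σ * b = |b| := by
        rcases hσ with h | h <;> rw [h] at hb' ⊢ <;> linarith
      have hc : (0:ℝ) < 1 - 1/g := by
        have : 1/g < 1 := by rw [div_lt_one hg0]; exact hg
        linarith
      simp only [mcpThresh, if_neg h1, if_pos h2] at hβ ⊢
      set s := σ * (|b| - l) / (1 - 1/g) with hsdef
      have hblpos : (0:ℝ) < |b| - l := by push_neg at h1; linarith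
      have habs_s : |s| = (|b| - l) / (1 - 1/g) := by
        rcases hσ with h | h <;> rw [hsdef, h]
        · rw [one_mul, abs_of_pos (div_pos hblpos hc)]
        · rw [show (-1:ℝ)*(|b|-l)/(1-1/g) = -((|b|-l)/(1-1/g)) by ring, abs_neg,
            abs_of_pos (div_pos hblpos hc)]
      have hs_le : |s| ≤ l*g := by
        rw [habs_s, div_le_iff₀ hc]
        have : l*g*(1 - 1/g) = l*g - l := by field_simp
        rw [this]; linarith
      have hσs : σ * s = |s| := by
        rw [habs_s, hsdef]
        rcases hσ with h | h <;> rw [h] <;> ring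
      have hσβ : σ * β ≤ |β| := by
        rcases hσ with h | h <;> rw [h]
        · simpa using le_abs_self β
        · simpa using neg_le_abs β
      have hg1 : (g:ℝ) - 1 ≠ 0 := ne_of_gt (by linarith)
      have hcs : (g-1)*s = g*(b - l*σ) := by
        rw [hsdef]
        field_simp
        linear_combination hb'
      rw [hmcp_eq |s| (abs_nonneg s) hs_le, sq_abs]
      have hge := hmcp_ge |β| (abs_nonneg β)
      rw [sq_abs] at hge
      have key : (β - b)^2/2 + (l*|β| - β^2/(2*g)) - ((s - b)^2/2 + (l*|s| - s^2/(2*g)))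
          = (g*(β-b)^2 + 2*g*l*|β| - β^2 - (g*(s-b)^2 + 2*g*l*|s| - s^2))/(2*g) := by
        field_simp; ring
      have hid : g*(β-b)^2 + 2*g*l*|β| - β^2 - (g*(s-b)^2 + 2*g*l*|s| - s^2)
          = (g-1)*(β-s)^2 + 2*g*l*(|β| - σ*β) := by
        linear_combination (2*(β-s)) * hcs + (2*g*l) * hσs
      have hpos : 0 < (g-1)*(β-s)^2 := by
        have : β - s ≠ 0 := sub_ne_zero_of_ne hβ
        have h2 : 0 < (β-s)^2 := by positivity
        nlinarith
      have h6 : 0 ≤ 2*g*l*(|β| - σ*β) := by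
        apply mul_nonneg (by positivity); linarith
      have hstrict : 0 < (β - b)^2/2 + (l*|β| - β^2/(2*g)) - ((s - b)^2/2 + (l*|s| - s^2/(2*g))) := by
        rw [key, hid]
        exact div_pos (by linarith) h2g
      linarith [hge, hstrict]
    · -- Case C : thresh = b
      simp only [mcpThresh, if_neg h1, if_neg h2] at hβ ⊢
      push_neg at h2
      have hbmcp : mcp l g |b| = l^2*g/2 := by
        unfold mcp; rw [if_neg (not_lt.mpr h2.le)]
      rw [hbmcp]
      by_cases hc : |β| < l*g
      · rw [hmcp_eq |β| (abs_nonneg β) hc.le, sq_abs]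
        have h4 : |b| - |β| ≤ |b - β| := abs_sub_abs_le_abs_sub b β
        have h5 : (b - β)^2 = |b - β|^2 := (sq_abs _).symm
        have key : (β - b)^2/2 + (l*|β| - β^2/(2*g)) - ((b-b)^2/2 + l^2*g/2)
            = (g*(β-b)^2 + 2*g*l*|β| - β^2 - l^2*g^2)/(2*g) := by
          field_simp; ring
        have h6 : l*g - |β| < |b - β| := by linarith
        have h7 : (0:ℝ) ≤ l*g - |β| := by linarith
        have h8 : (l*g - |β|)^2 < |b - β|^2 := by nlinarith
        have h9 : (β - b)^2 = |b - β|^2 := by rw [← h5]; ring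
        have h10 : g*(l*g - |β|)^2 < g*((β - b)^2) := by
          rw [h9]; exact mul_lt_mul_of_pos_left h8 hg0
        have h11 : 0 ≤ (g-1)*(l*g - |β|)^2 := mul_nonneg (by linarith) (sq_nonneg _)
        have h12 : β^2 = |β|^2 := (sq_abs β).symm
        have hpoly : 0 < g*(β-b)^2 + 2*g*l*|β| - β^2 - l^2*g^2 := by
          nlinarith [h10, h11, h12]
        nlinarith [div_pos hpoly h2g, key]
      · unfold mcp
        rw [if_neg hc]
        have hne : β - b ≠ 0 := sub_ne_zero_of_ne hβ
        have : 0 < (β - b)^2 := by positivity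
        nlinarith
end

section
/- The reparametrized negative log-likelihood L(Φ,R) = Σ_{j=1}^p [ −n log ρ_j + ½‖ρ_j x_j − X φ_j‖² ], viewed as a function of (Φ, R) where Φ ∈ ℝ^{p×p} with zero diagonal and R = diag(ρ₁,…,ρ_p) with ρ_j > 0, is a convex function on its (convex) domain. -/
open Finset Set

private lemma convexOn_finset_sum {ι E : Type*} [AddCommGroup E] [Module ℝ E]
    (t : Finset ι) {s : Set E} (hs : Convex ℝ s) {f : ι → E → ℝ}
    (h : ∀ i ∈ t, ConvexOn ℝ s (f i)) :
    ConvexOn ℝ s (fun x => ∑ i ∈ t, f i x) := by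
  classical
  induction t using Finset.cons_induction with
  | empty => simpa using convexOn_const 0 hs
  | cons a t ha ih =>
    simp only [Finset.sum_cons]
    exact (h a (Finset.mem_cons_self a t)).add
      (ih fun i hi => h i (Finset.mem_cons_of_mem hi))

/-- The reparametrized negative log-likelihood
L(Φ,R) = Σⱼ [−n log ρⱼ + ½‖ρⱼ xⱼ − X φⱼ‖²]
is convex on its convex domain {Φ has zero diagonal, ρⱼ > 0}. -/
theorem reparam_loglik_convex {n p : ℕ} (X : Matrix (Fin n) (Fin p) ℝ) :
    Convex ℝ {ΦR : Matrix (Fin p) (Fin p) ℝ × (Fin p → ℝ) |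
        (∀ j, ΦR.1 j j = 0) ∧ ∀ j, 0 < ΦR.2 j} ∧
    ConvexOn ℝ {ΦR : Matrix (Fin p) (Fin p) ℝ × (Fin p → ℝ) |
        (∀ j, ΦR.1 j j = 0) ∧ ∀ j, 0 < ΦR.2 j}
      (fun ΦR => ∑ j : Fin p, (-(n : ℝ) * Real.log (ΦR.2 j)
        + (∑ h : Fin n, (ΦR.2 j * X h j - ∑ i : Fin p, X h i * ΦR.1 i j) ^ 2) / 2)) := by
  set S : Set (Matrix (Fin p) (Fin p) ℝ × (Fin p → ℝ)) :=
    {ΦR | (∀ j, ΦR.1 j j = 0) ∧ ∀ j, 0 < ΦR.2 j} with hS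
  have hconv : Convex ℝ S := by
    rintro x ⟨hx1, hx2⟩ y ⟨hy1, hy2⟩ a b ha hb hab
    constructor
    · intro j
      simp [hx1 j, hy1 j]
    · intro j
      have : (a • x + b • y).2 j = a * x.2 j + b * y.2 j := by simp [mul_comm]
      rw [this]
      rcases ha.eq_or_lt with h | h
      · have hb1 : b = 1 := by linarith
        simp [← h, hb1, hy2 j]
      · exact add_pos_of_pos_of_nonneg (mul_pos h (hx2 j))
          (mul_nonneg hb (hy2 j).le)
  refine ⟨hconv, ?_⟩
  apply convexOn_finset_sum _ hconv
  intro j _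
  apply ConvexOn.add
  · -- the -n log term
    have hlog : ConvexOn ℝ (Ioi (0:ℝ)) (fun z => -(n:ℝ) * Real.log z) := by
      have := (strictConcaveOn_log_Ioi.concaveOn).smul (c := (n:ℝ)) (by positivity)
      have h2 := this.neg
      convert h2 using 2 with z
      iterate 4 rfl
      simp [mul_comm]
    exact (hlog.comp_affineMap
      ((LinearMap.proj j ∘ₗ LinearMap.snd ℝ _ _).toAffineMap)).subset
      (fun z hz => Set.mem_preimage.mpr (hz.2 j)) hconv
  · -- quadratic term
    have hq : ConvexOn ℝ S (fun ΦR : Matrix (Fin p) (Fin p) ℝ × (Fin p → ℝ) =>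
        ∑ h : Fin n, (ΦR.2 j * X h j - ∑ i : Fin p, X h i * ΦR.1 i j) ^ 2) := by
      apply convexOn_finset_sum _ hconv
      intro h _
      let L : (Matrix (Fin p) (Fin p) ℝ × (Fin p → ℝ)) →ₗ[ℝ] ℝ :=
        { toFun := fun z => z.2 j * X h j - ∑ i : Fin p, X h i * z.1 i j
          map_add' := by
            intro z w
            simp [Matrix.add_apply, Pi.add_apply, Finset.sum_add_distrib, mul_add, add_mul]
            ring
          map_smul' := by
            intro c z
            simp only [Prod.smul_snd, Pi.smul_apply, Prod.smul_fst, Matrix.smul_apply,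
              smul_eq_mul, RingHom.id_apply, Finset.mul_sum, mul_sub]
            ring_nf }
      have hsq : ConvexOn ℝ (univ : Set ℝ) (fun x : ℝ => x ^ 2) :=
        Even.convexOn_pow (by norm_num)
      have := hsq.comp_affineMap L.toAffineMap
      simp only [Set.preimage_univ] at this
      exact (this.subset (Set.subset_univ _) hconv)
    have := hq.smul (c := (2:ℝ)⁻¹) (by norm_num)
    convert this using 2 with z
    iterate 3 rfl
    simp [div_eq_inv_mul, smul_eq_mul]
end
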